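/- arXiv:1301.6432 — 5 statements merged into one kernel-verified Lean document; each statement's English description precedes it below -/
import Mathlib

section
/- For positive reals a_1, ..., a_n, the limit as x → ∞ (x real) of (∏_{k=1}^n (a_k + x))^{1/n} - x equals the arithmetic mean A_n(a) = (1/n)∑_{k=1}^n a_k. -/
open Finset Filter Real Topology

theorem geometric_mean_shift_limit_atTop
    (n : ℕ) (hn : 1 ≤ n) (a : ℕ → ℝ)
    (hpos : ∀ k ∈ Finset.Icc 1 n, 0 < a k) :
    Tendsto
      (fun x : ℝ =>
        (∏ k ∈ Finset.Icc 1 n, (a k + x)) ^ ((1 : ℝ) / n) - x)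
      atTop
      (nhds ((∑ k ∈ Finset.Icc 1 n, a k) / n)) := by
  set g : ℝ → ℝ := fun t => (∏ k ∈ Finset.Icc 1 n, (1 + a k * t)) ^ ((1 : ℝ) / n) with hg
  have hn0 : (n : ℝ) ≠ 0 := Nat.cast_ne_zero.mpr (by omega)
  -- derivative of the product at 0
  have hP : HasDerivAt (fun t => ∏ k ∈ Finset.Icc 1 n, (1 + a k * t))
      (∑ k ∈ Finset.Icc 1 n, a k) 0 := by
    have := HasDerivAt.fun_finsetProd (u := Finset.Icc 1 n)
      (f := fun k t => 1 + a k * t) (f' := fun k => a k) (x := (0:ℝ))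
      (fun i _ => by
        simpa using (((hasDerivAt_id (0:ℝ)).const_mul (a i)).const_add (1:ℝ)))
    simpa using this
  have hG : HasDerivAt g ((∑ k ∈ Finset.Icc 1 n, a k) / n) 0 := by
    have h1 : (∏ k ∈ Finset.Icc 1 n, (1 + a k * (0:ℝ))) = 1 := by simp
    have := hP.rpow_const (p := (1:ℝ)/n) (Or.inl (by rw [h1]; norm_num))
    convert this using 1
    rw [h1]
    simp [div_eq_mul_inv, mul_comm]
  have hslope : Tendsto (slope g 0) (𝓝[≠] 0) (nhds ((∑ k ∈ Finset.Icc 1 n, a k) / n)) :=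
    hasDerivAt_iff_tendsto_slope.mp hG
  have hinv : Tendsto (fun x : ℝ => x⁻¹) atTop (𝓝[≠] (0:ℝ)) :=
    tendsto_inv_atTop_nhdsGT_zero.mono_right (nhdsWithin_mono 0 fun y hy => ne_of_gt hy)
  have hcomp := hslope.comp hinv
  refine hcomp.congr' ?_
  filter_upwards [eventually_gt_atTop (0:ℝ)] with x hx
  have hxne : x ≠ 0 := ne_of_gt hx
  have hg0 : g 0 = 1 := by simp [hg]
  have key : g x⁻¹ * x = (∏ k ∈ Finset.Icc 1 n, (a k + x)) ^ ((1 : ℝ) / n) := by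
    have hxpow : x = ((x ^ n : ℝ)) ^ ((1:ℝ)/n) := by
      rw [← Real.rpow_natCast x n, ← Real.rpow_mul hx.le]
      rw [mul_one_div, div_self hn0, Real.rpow_one]
    have hnonneg : 0 ≤ ∏ k ∈ Finset.Icc 1 n, (1 + a k * x⁻¹) :=
      Finset.prod_nonneg fun k hk => by have := hpos k hk; positivity
    have hprodeq : (∏ k ∈ Finset.Icc 1 n, (1 + a k * x⁻¹)) * x ^ n
        = ∏ k ∈ Finset.Icc 1 n, (a k + x) := by
      have hxn : x ^ n = ∏ _k ∈ Finset.Icc 1 n, x := by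
        rw [Finset.prod_const, Nat.card_Icc]; simp
      rw [hxn, ← Finset.prod_mul_distrib]
      refine Finset.prod_congr rfl fun k hk => ?_
      field_simp
      ring
    calc g x⁻¹ * x
        = (∏ k ∈ Finset.Icc 1 n, (1 + a k * x⁻¹)) ^ ((1:ℝ)/n) * (x ^ n) ^ ((1:ℝ)/n) := by
          simp only [hg]; rw [← hxpow]
      _ = (∏ k ∈ Finset.Icc 1 n, (a k + x)) ^ ((1 : ℝ) / n) := by
          rw [← Real.mul_rpow hnonneg (by positivity), hprodeq]
  show slope g 0 x⁻¹ = _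
  rw [slope_def_field, hg0, sub_zero]
  rw [show (g x⁻¹ - 1) / x⁻¹ = g x⁻¹ * x - x from by rw [div_eq_mul_inv, inv_inv, sub_mul, one_mul], key]
end

section
/- Let a_1 ≤ a_2 ≤ ... ≤ a_n be positive reals, fix ℓ with 1 ≤ ℓ ≤ n-1, and fix t with a_ℓ - a_1 < t < a_{ℓ+1} - a_1. Define h_n(z) = exp((1/n)∑_{k=1}^n Log(a_k - a_1 + z)) - z. Then the limit as ε → 0⁺ of Im h_n(-t + iε) equals (∏_{k=1}^n |a_k - a_1 - t|)^{1/n} · sin(ℓπ/n). -/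
open Finset Filter Real Complex

theorem imaginary_part_limit_on_cut
    (n : ℕ) (hn : 2 ≤ n) (a : ℕ → ℝ)
    (hpos : ∀ k ∈ Finset.Icc 1 n, 0 < a k)
    (hmono : ∀ k ∈ Finset.Icc 1 (n - 1), a k ≤ a (k + 1))
    (ℓ : ℕ) (hℓ : ℓ ∈ Finset.Icc 1 (n - 1))
    (t : ℝ) (ht1 : a ℓ - a 1 < t) (ht2 : t < a (ℓ + 1) - a 1) :
    Tendsto
      (fun ε : ℝ =>
        (Complex.exp ((1 / (n : ℂ)) *
            ∑ k ∈ Finset.Icc 1 n,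
              Complex.log (((a k - a 1 : ℝ) : ℂ) + (-(t : ℂ) + (ε : ℂ) * Complex.I)))
          - (-(t : ℂ) + (ε : ℂ) * Complex.I)).im)
      (nhdsWithin 0 (Set.Ioi 0))
      (nhds ((∏ k ∈ Finset.Icc 1 n, |a k - a 1 - t|) ^ ((1 : ℝ) / n) *
        Real.sin (ℓ * Real.pi / n))) := by
  obtain ⟨hℓ1, hℓ2⟩ := Finset.mem_Icc.mp hℓ
  have hn0 : 0 < n := by omega
  have hℓn : ℓ + 1 ≤ n := by omega
  set x : ℕ → ℝ := fun k => a k - a 1 - t with hxdef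
  -- monotonicity on [1, n]
  have hmono' : ∀ i j : ℕ, 1 ≤ i → i ≤ j → j ≤ n → a i ≤ a j := by
    intro i j h1 hij hjn
    induction j with
    | zero => omega
    | succ m ih =>
      rcases Nat.lt_or_ge i (m + 1) with h | h
      · have h1m : a i ≤ a m := ih (by omega) (by omega)
        have h2m : a m ≤ a (m + 1) := hmono m (Finset.mem_Icc.mpr ⟨by omega, by omega⟩)
        linarith
      · have : i = m + 1 := by omega
        simp [this]
  have hxneg : ∀ k : ℕ, 1 ≤ k → k ≤ ℓ → x k < 0 := by
    intro k h1 h2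
    have : a k ≤ a ℓ := hmono' k ℓ h1 h2 (by omega)
    simp only [hxdef]; linarith
  have hxpos : ∀ k : ℕ, ℓ + 1 ≤ k → k ≤ n → 0 < x k := by
    intro k h1 h2
    have : a (ℓ + 1) ≤ a k := hmono' (ℓ + 1) k (by omega) h1 h2
    simp only [hxdef]; linarith
  have hxne : ∀ k ∈ Finset.Icc 1 n, x k ≠ 0 := by
    intro k hk
    obtain ⟨hk1, hk2⟩ := Finset.mem_Icc.mp hk
    rcases le_or_gt k ℓ with h | h
    · exact (hxneg k hk1 h).ne
    · exact (hxpos k (by omega) hk2).ne'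
  -- per-term limits
  have key : ∀ k ∈ Finset.Icc 1 n,
      Tendsto (fun ε : ℝ =>
          Complex.log (((a k - a 1 : ℝ) : ℂ) + (-(t : ℂ) + (ε : ℂ) * Complex.I)))
        (nhdsWithin 0 (Set.Ioi 0))
        (nhds (((Real.log |x k| : ℝ) : ℂ) +
          ((if k ≤ ℓ then (Real.pi : ℝ) else 0 : ℝ) : ℂ) * Complex.I)) := by
    intro k hk
    obtain ⟨hk1, hk2⟩ := Finset.mem_Icc.mp hk
    have heq : ∀ ε : ℝ, ((a k - a 1 : ℝ) : ℂ) + (-(t : ℂ) + (ε : ℂ) * Complex.I)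
        = ((x k : ℝ) : ℂ) + (ε : ℂ) * Complex.I := by
      intro ε; simp only [hxdef]; push_cast; ring
    simp only [heq]
    have hpath : Tendsto (fun ε : ℝ => ((x k : ℝ) : ℂ) + (ε : ℂ) * Complex.I)
        (nhdsWithin 0 (Set.Ioi 0)) (nhds ((x k : ℂ))) := by
      have : Tendsto (fun ε : ℝ => ((x k : ℝ) : ℂ) + (ε : ℂ) * Complex.I)
          (nhds 0) (nhds (((x k : ℝ) : ℂ) + (0 : ℂ) * Complex.I)) := by
        exact tendsto_const_nhds.add
          ((Complex.continuous_ofReal.tendsto 0).mul tendsto_const_nhds)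
      simpa using this.mono_left nhdsWithin_le_nhds
    by_cases hkl : k ≤ ℓ
    · have hxk : x k < 0 := hxneg k hk1 hkl
      have hlog := Complex.tendsto_log_nhdsWithin_im_nonneg_of_re_neg_of_im_zero
        (z := ((x k : ℝ) : ℂ)) (by simpa using hxk) (by simp)
      have h2 : Tendsto (fun ε : ℝ => ((x k : ℝ) : ℂ) + (ε : ℂ) * Complex.I)
          (nhdsWithin 0 (Set.Ioi 0)) (nhdsWithin ((x k : ℂ)) { z : ℂ | 0 ≤ z.im }) := by
        apply tendsto_nhdsWithin_of_tendsto_nhds_of_eventually_within _ hpath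
        filter_upwards [self_mem_nhdsWithin] with ε hε
        simp [Set.mem_setOf_eq, le_of_lt (Set.mem_Ioi.mp hε)]
      have := hlog.comp h2
      simp only [Function.comp_def] at this
      simpa [Complex.norm_real, if_pos hkl, abs_of_neg hxk] using this
    · have hxk : 0 < x k := hxpos k (by omega) hk2
      have hcont : ContinuousAt Complex.log ((x k : ℝ) : ℂ) := by
        apply continuousAt_clog
        rw [Complex.mem_slitPlane_iff]
        left; simpa using hxk
      have := hcont.tendsto.comp hpath
      simp only [Function.comp_def] at this
      convert this using 2
      rw [if_neg hkl, abs_of_pos hxk, Complex.ofReal_log hxk.le]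
      push_cast; ring
  -- sum limit
  set S : ℝ := ∑ k ∈ Finset.Icc 1 n, Real.log |x k| with hSdef
  have hsum_ite : ∑ k ∈ Finset.Icc 1 n, (if k ≤ ℓ then (Real.pi : ℝ) else 0) = ℓ * Real.pi := by
    rw [Finset.sum_ite, Finset.sum_const, Finset.sum_const_zero, add_zero]
    have hfil : (Finset.Icc 1 n).filter (fun k => k ≤ ℓ) = Finset.Icc 1 ℓ := by
      ext k; simp only [Finset.mem_filter, Finset.mem_Icc]; omega
    rw [hfil, Nat.card_Icc]
    simp [nsmul_eq_mul]
  have hsumeq : ∑ k ∈ Finset.Icc 1 n,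
      (((Real.log |x k| : ℝ) : ℂ) + ((if k ≤ ℓ then (Real.pi : ℝ) else 0 : ℝ) : ℂ) * Complex.I)
      = ((S : ℝ) : ℂ) + ((ℓ * Real.pi : ℝ) : ℂ) * Complex.I := by
    rw [Finset.sum_add_distrib, ← Finset.sum_mul, ← Complex.ofReal_sum, ← Complex.ofReal_sum,
      hsum_ite, hSdef]
  have hsum : Tendsto (fun ε : ℝ =>
      ∑ k ∈ Finset.Icc 1 n,
        Complex.log (((a k - a 1 : ℝ) : ℂ) + (-(t : ℂ) + (ε : ℂ) * Complex.I)))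
      (nhdsWithin 0 (Set.Ioi 0))
      (nhds (((S : ℝ) : ℂ) + ((ℓ * Real.pi : ℝ) : ℂ) * Complex.I)) := by
    rw [← hsumeq]
    exact tendsto_finset_sum _ key
  -- full complex limit
  have hlin : Tendsto (fun ε : ℝ => (-(t : ℂ) + (ε : ℂ) * Complex.I))
      (nhdsWithin 0 (Set.Ioi 0)) (nhds (-(t : ℂ))) := by
    have : Tendsto (fun ε : ℝ => (-(t : ℂ) + (ε : ℂ) * Complex.I))
        (nhds 0) (nhds (-(t : ℂ) + (0 : ℂ) * Complex.I)) :=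
      tendsto_const_nhds.add ((Complex.continuous_ofReal.tendsto 0).mul tendsto_const_nhds)
    simpa using this.mono_left nhdsWithin_le_nhds
  have hF : Tendsto (fun ε : ℝ =>
      Complex.exp ((1 / (n : ℂ)) *
          ∑ k ∈ Finset.Icc 1 n,
            Complex.log (((a k - a 1 : ℝ) : ℂ) + (-(t : ℂ) + (ε : ℂ) * Complex.I)))
        - (-(t : ℂ) + (ε : ℂ) * Complex.I))
      (nhdsWithin 0 (Set.Ioi 0))
      (nhds (Complex.exp ((1 / (n : ℂ)) * (((S : ℝ) : ℂ) + ((ℓ * Real.pi : ℝ) : ℂ) * Complex.I))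
        - (-(t : ℂ)))) :=
    (Complex.continuous_exp.continuousAt.tendsto.comp (hsum.const_mul _)).sub hlin
  have him := (Complex.continuous_im.continuousAt.tendsto).comp hF
  simp only [Function.comp_def] at him
  convert him using 2
  -- compute the imaginary part of the limit
  have hncC : (n : ℂ) ≠ 0 := by exact_mod_cast hn0.ne'
  have hw : (1 / (n : ℂ)) * (((S : ℝ) : ℂ) + ((ℓ * Real.pi : ℝ) : ℂ) * Complex.I)
      = ((S / n : ℝ) : ℂ) + ((ℓ * Real.pi / n : ℝ) : ℂ) * Complex.I := by
    push_cast
    field_simp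
  rw [Complex.sub_im, hw]
  have him2 : (Complex.exp (((S / n : ℝ) : ℂ) + ((ℓ * Real.pi / n : ℝ) : ℂ) * Complex.I)).im
      = Real.exp (S / n) * Real.sin (ℓ * Real.pi / n) := by
    rw [Complex.exp_im]
    simp
  rw [him2]
  have hP : 0 < ∏ k ∈ Finset.Icc 1 n, |a k - a 1 - t| := by
    apply Finset.prod_pos
    intro k hk
    exact abs_pos.mpr (hxne k hk)
  have hSlog : S = Real.log (∏ k ∈ Finset.Icc 1 n, |a k - a 1 - t|) := by
    rw [Real.log_prod]
    intro k hk
    exact abs_ne_zero.mpr (hxne k hk)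
  rw [Real.rpow_def_of_pos hP, ← hSlog]
  simp
  ring_nf
  exact Or.inl trivial
end

section
/- Let 0 < a < b. Then √(ab) = (a+b)/2 - (1/π)∫_a^b √((t-a)(b-t)) dt/t. -/
open Real intervalIntegral Set

set_option maxHeartbeats 1000000 in
lemma key_integral (a b : ℝ) (ha : 0 < a) (hab : a < b) :
    ∫ t in a..b, Real.sqrt ((t - a) * (b - t)) / t
      = Real.pi * ((a + b) / 2 - Real.sqrt (a * b)) := by
  have hba : 0 < b - a := by linarith
  set c := Real.sqrt (a * b) with hc
  have hab2 : c ^ 2 = a * b := Real.sq_sqrt (mul_pos ha (ha.trans hab)).le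
  have hcpos : 0 < c := Real.sqrt_pos.mpr (mul_pos ha (ha.trans hab))
  set F : ℝ → ℝ := fun t =>
    Real.sqrt ((t - a) * (b - t)) + (a + b) / 2 * Real.arcsin ((2 * t - a - b) / (b - a))
      - c * Real.arcsin (((a + b) * t - 2 * a * b) / (t * (b - a))) with hF
  have hcont : ContinuousOn F (Icc a b) := by
    apply ContinuousOn.sub
    · apply ContinuousOn.add
      · exact (continuous_sqrt.comp (by continuity)).continuousOn
      · exact (continuous_const.mul (Real.continuous_arcsin.comp (by continuity))).continuousOn
    · apply ContinuousOn.mul continuousOn_const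
      apply Real.continuous_arcsin.comp_continuousOn
      apply ContinuousOn.div (Continuous.continuousOn (by continuity))
        (Continuous.continuousOn (by continuity))
      intro x hx
      exact (mul_pos (lt_of_lt_of_le ha hx.1) hba).ne'
  have hderiv : ∀ t ∈ Ioo a b,
      HasDerivAt F (Real.sqrt ((t - a) * (b - t)) / t) t := by
    intro t ht
    obtain ⟨hta, htb⟩ := ht
    have ht0 : 0 < t := lt_trans ha hta
    have hp : 0 < (t - a) * (b - t) := by nlinarith
    set s := Real.sqrt ((t - a) * (b - t)) with hs
    have hspos : 0 < s := Real.sqrt_pos.mpr hp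
    have hs2 : s ^ 2 = (t - a) * (b - t) := Real.sq_sqrt hp.le
    have htba : 0 < t * (b - a) := mul_pos ht0 hba
    have hpoly : HasDerivAt (fun t => (t - a) * (b - t)) (a + b - 2 * t) t := by
      have := ((hasDerivAt_id t).sub_const a).mul ((hasDerivAt_const t b).sub (hasDerivAt_id t))
      exact this.congr_deriv (by simp only [id_eq, Pi.sub_apply]; ring)
    have h1 : HasDerivAt (fun t => Real.sqrt ((t - a) * (b - t)))
        (1 / (2 * s) * (a + b - 2 * t)) t :=
      (Real.hasDerivAt_sqrt hp.ne').comp t hpoly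
    have hu : HasDerivAt (fun t => (2 * t - a - b) / (b - a)) (2 / (b - a)) t := by
      have := (((hasDerivAt_id t).const_mul 2).sub_const a).sub_const b
      exact (this.div_const (b - a)).congr_deriv (by ring)
    have hu1 : (2 * t - a - b) / (b - a) ≠ -1 :=
      (((lt_div_iff₀ hba).mpr (by nlinarith)) : (-1 : ℝ) < _).ne'
    have hu2 : (2 * t - a - b) / (b - a) ≠ 1 :=
      (((div_lt_one hba).mpr (by nlinarith))).ne
    have h2 : HasDerivAt (fun t => Real.arcsin ((2 * t - a - b) / (b - a)))
        (1 / Real.sqrt (1 - ((2 * t - a - b) / (b - a)) ^ 2) * (2 / (b - a))) t :=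
      by have := (Real.hasDerivAt_arcsin hu1 hu2).comp t hu; exact this
    have hsqu : Real.sqrt (1 - ((2 * t - a - b) / (b - a)) ^ 2) = 2 * s / (b - a) := by
      rw [show 1 - ((2 * t - a - b) / (b - a)) ^ 2 = (2 * s / (b - a)) ^ 2 by
        field_simp; nlinarith [hs2]]
      exact Real.sqrt_sq (by positivity)
    have hg : HasDerivAt (fun t => ((a + b) * t - 2 * a * b) / (t * (b - a)))
        ((((a + b)) * (t * (b - a)) - ((a + b) * t - 2 * a * b) * (b - a)) / (t * (b - a)) ^ 2)
        t := by
      have hnum : HasDerivAt (fun t => (a + b) * t - 2 * a * b) (a + b) t := by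
        have := ((hasDerivAt_id t).const_mul (a + b)).sub_const (2 * a * b)
        exact this.congr_deriv (by ring)
      have hden : HasDerivAt (fun t => t * (b - a)) (b - a) t := by
        have := (hasDerivAt_id t).mul_const (b - a)
        exact this.congr_deriv (by ring)
      exact hnum.div hden htba.ne'
    have hg1 : ((a + b) * t - 2 * a * b) / (t * (b - a)) ≠ -1 :=
      (((lt_div_iff₀ htba).mpr (by nlinarith)) : (-1 : ℝ) < _).ne'
    have hg2 : ((a + b) * t - 2 * a * b) / (t * (b - a)) ≠ 1 :=
      (((div_lt_one htba).mpr (by nlinarith))).ne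
    have h3 : HasDerivAt (fun t => Real.arcsin (((a + b) * t - 2 * a * b) / (t * (b - a))))
        (1 / Real.sqrt (1 - (((a + b) * t - 2 * a * b) / (t * (b - a))) ^ 2)
          * ((((a + b)) * (t * (b - a)) - ((a + b) * t - 2 * a * b) * (b - a)) / (t * (b - a)) ^ 2))
        t := by have := (Real.hasDerivAt_arcsin hg1 hg2).comp t hg; exact this
    have hsqg : Real.sqrt (1 - (((a + b) * t - 2 * a * b) / (t * (b - a))) ^ 2)
        = 2 * c * s / (t * (b - a)) := by
      rw [show 1 - (((a + b) * t - 2 * a * b) / (t * (b - a))) ^ 2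
          = (2 * c * s / (t * (b - a))) ^ 2 by
        field_simp; linear_combination (-4*s^2)*hab2 + (-4*a*b)*hs2]
      exact Real.sqrt_sq (by positivity)
    have hD : HasDerivAt F
        (1 / (2 * s) * (a + b - 2 * t)
          + (a + b) / 2 * (1 / Real.sqrt (1 - ((2 * t - a - b) / (b - a)) ^ 2) * (2 / (b - a)))
          - c *
            (1 / Real.sqrt (1 - (((a + b) * t - 2 * a * b) / (t * (b - a))) ^ 2)
              * ((((a + b)) * (t * (b - a)) - ((a + b) * t - 2 * a * b) * (b - a))
                / (t * (b - a)) ^ 2))) t :=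
      (h1.add (h2.const_mul ((a + b) / 2))).sub (h3.const_mul c)
    convert hD using 1
    rw [hsqu, hsqg]
    field_simp
    linear_combination 2 * hs2
  have hint : IntervalIntegrable (fun t => Real.sqrt ((t - a) * (b - t)) / t)
      MeasureTheory.volume a b := by
    apply ContinuousOn.intervalIntegrable
    rw [Set.uIcc_of_le hab.le]
    apply ContinuousOn.div
    · exact (continuous_sqrt.comp (by continuity)).continuousOn
    · fun_prop
    · intro x hx; exact (lt_of_lt_of_le ha hx.1).ne'
  have heq := intervalIntegral.integral_eq_sub_of_hasDeriv_right_of_le hab.le hcont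
    (fun t ht => (hderiv t ht).hasDerivWithinAt) hint
  rw [heq]
  have hFb : F b = (a + b) / 2 * (Real.pi / 2) - c * (Real.pi / 2) := by
    have e1 : (2 * b - a - b) / (b - a) = 1 := by
      rw [div_eq_one_iff_eq hba.ne']; ring
    have e2 : ((a + b) * b - 2 * a * b) / (b * (b - a)) = 1 := by
      rw [div_eq_one_iff_eq (mul_pos (lt_trans ha hab) hba).ne']; ring
    simp [hF, e1, e2, Real.arcsin_one]
  have hFa : F a = (a + b) / 2 * (-(Real.pi / 2)) - c * (-(Real.pi / 2)) := by
    have e1 : (2 * a - a - b) / (b - a) = -1 := by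
      rw [div_eq_iff hba.ne']; ring
    have e2 : ((a + b) * a - 2 * a * b) / (a * (b - a)) = -1 := by
      rw [div_eq_iff (mul_pos ha hba).ne']; ring
    simp [hF, e1, e2, Real.arcsin_neg, Real.arcsin_one]
  rw [hFb, hFa]; ring

theorem sqrt_integral_representation_real
    (a b : ℝ) (ha : 0 < a) (hab : a < b) :
    Real.sqrt (a * b)
      = (a + b) / 2
        - (1 / Real.pi) * ∫ t in a..b, Real.sqrt ((t - a) * (b - t)) / t := by
  rw [key_integral a b ha hab]
  field_simp [Real.pi_ne_zero]
  ring
end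

section
/- Let 0 < a_1 ≤ a_2 ≤ ... ≤ a_n and let x, y be real with 0 < x < y. Then (∏_{k=1}^n (a_k + y))^{1/n} - y ≥ (∏_{k=1}^n (a_k + x))^{1/n} - x; that is, x ↦ G_n(a + x) - x is nondecreasing on (0, ∞). -/
open Finset

/-- Superadditivity of the geometric mean against a constant:
`(∏ u)^{1/n} + v ≤ (∏ (u + v))^{1/n}`. -/
lemma geom_mean_add_const_le {n : ℕ} (hn : 1 ≤ n) (s : Finset ℕ) (hcard : s.card = n)
    (u : ℕ → ℝ) (hu : ∀ k ∈ s, 0 < u k) (v : ℝ) (hv : 0 < v) :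
    (∏ k ∈ s, u k) ^ ((1 : ℝ) / n) + v ≤ (∏ k ∈ s, (u k + v)) ^ ((1 : ℝ) / n) := by
  have hn0 : (n : ℝ) ≠ 0 := by positivity
  have hGpos : 0 < ∏ k ∈ s, (u k + v) := Finset.prod_pos fun k hk => by linarith [hu k hk]
  have hGpos' : 0 < (∏ k ∈ s, (u k + v)) ^ ((1 : ℝ) / n) := Real.rpow_pos_of_pos hGpos _
  have hw : ∀ k ∈ s, (0 : ℝ) ≤ 1 / n := fun k _ => by positivity
  have hw' : ∑ _k ∈ s, (1 : ℝ) / n = 1 := by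
    rw [Finset.sum_const, hcard, nsmul_eq_mul]
    field_simp
  have huv : ∀ k ∈ s, 0 < u k + v := fun k hk => by linarith [hu k hk]
  have h1 := Real.geom_mean_le_arith_mean_weighted s (fun _ => (1 : ℝ) / n)
    (fun k => u k / (u k + v)) hw hw'
    (fun k hk => div_nonneg (hu k hk).le (huv k hk).le)
  have h2 := Real.geom_mean_le_arith_mean_weighted s (fun _ => (1 : ℝ) / n)
    (fun k => v / (u k + v)) hw hw'
    (fun k hk => div_nonneg hv.le (huv k hk).le)
  -- rewrite LHS of h1
  have e1 : ∏ k ∈ s, (u k / (u k + v)) ^ ((1 : ℝ) / n)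
      = (∏ k ∈ s, u k) ^ ((1 : ℝ) / n) / (∏ k ∈ s, (u k + v)) ^ ((1 : ℝ) / n) := by
    rw [← Real.finset_prod_rpow s u (fun k hk => (hu k hk).le),
      ← Real.finset_prod_rpow s _ (fun k hk => (huv k hk).le), ← Finset.prod_div_distrib]
    exact Finset.prod_congr rfl fun k hk => Real.div_rpow (hu k hk).le (huv k hk).le _
  have e2 : ∏ k ∈ s, (v / (u k + v)) ^ ((1 : ℝ) / n)
      = v / (∏ k ∈ s, (u k + v)) ^ ((1 : ℝ) / n) := by
    rw [Real.finset_prod_rpow s _ (fun k hk => div_nonneg hv.le (huv k hk).le),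
      Finset.prod_div_distrib, Finset.prod_const, hcard,
      Real.div_rpow (by positivity) (Finset.prod_nonneg fun k hk => (huv k hk).le),
      ← Real.rpow_natCast v n, ← Real.rpow_mul hv.le, mul_one_div, div_self hn0,
      Real.rpow_one]
  -- sum of RHSs equals 1
  have e3 : (∑ k ∈ s, (1 : ℝ) / n * (u k / (u k + v)))
      + (∑ k ∈ s, (1 : ℝ) / n * (v / (u k + v))) = 1 := by
    have hterm : ∀ k ∈ s, (1 : ℝ) / n * (u k / (u k + v)) + (1 : ℝ) / n * (v / (u k + v))
        = (1 : ℝ) / n := fun k hk => by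
      rw [← mul_add, ← add_div, div_self (huv k hk).ne', mul_one]
    rw [← Finset.sum_add_distrib, Finset.sum_congr rfl hterm, hw']
  have key : (∏ k ∈ s, u k) ^ ((1 : ℝ) / n) / (∏ k ∈ s, (u k + v)) ^ ((1 : ℝ) / n)
      + v / (∏ k ∈ s, (u k + v)) ^ ((1 : ℝ) / n) ≤ 1 := by
    rw [← e1, ← e2]
    calc _ ≤ (∑ k ∈ s, (1 : ℝ) / n * (u k / (u k + v)))
        + (∑ k ∈ s, (1 : ℝ) / n * (v / (u k + v))) := add_le_add h1 h2
      _ = 1 := e3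
  rw [← add_div, div_le_one hGpos'] at key
  exact key

theorem shifted_geometric_mean_monotone
    (n : ℕ) (hn : 1 ≤ n) (a : ℕ → ℝ)
    (hpos : ∀ k ∈ Finset.Icc 1 n, 0 < a k)
    (hmono : ∀ k ∈ Finset.Icc 1 (n - 1), a k ≤ a (k + 1))
    (x y : ℝ) (hx : 0 < x) (hxy : x < y) :
    (∏ k ∈ Finset.Icc 1 n, (a k + x)) ^ ((1 : ℝ) / n) - x
      ≤ (∏ k ∈ Finset.Icc 1 n, (a k + y)) ^ ((1 : ℝ) / n) - y := by
  have hcard : (Finset.Icc 1 n).card = n := by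
    rw [Nat.card_Icc]; omega
  have hu : ∀ k ∈ Finset.Icc 1 n, 0 < a k + x := fun k hk => by linarith [hpos k hk]
  have hv : 0 < y - x := by linarith
  have h := geom_mean_add_const_le hn (Finset.Icc 1 n) hcard (fun k => a k + x) hu (y - x) hv
  have he : ∀ k ∈ Finset.Icc 1 n, (a k + x) + (y - x) = a k + y := fun k _ => by ring
  rw [Finset.prod_congr rfl he] at h
  linarith
end

section
/- Let 0 < a_1 ≤ a_2 ≤ ... ≤ a_n. The function z ↦ exp((1/n)∑_{k=1}^n Log(a_k + z)) - z - A_n(a), where A_n(a) = (1/n)∑ a_k, is holomorphic on ℂ \ (-∞, -a_1] and tends to 0 as |z| → ∞. -/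
open Finset Filter Real Complex

private lemma aux_arg_mem (t : ℝ) (ht : 0 < t) (z : ℂ) (hz : z ≠ 0)
    (hlt : t < ‖z‖) :
    Complex.arg z + Complex.arg (1 + (t : ℂ)/z) ∈ Set.Ioc (-π) π := by
  set w : ℂ := (t : ℂ)/z with hw
  have habs : ‖w‖ < 1 := by
    rw [hw, norm_div, Complex.norm_real, Real.norm_eq_abs, abs_of_pos ht]
    rw [div_lt_one (norm_pos_iff.2 hz)]
    exact hlt
  have hre : 0 < (1 + w).re := by
    have : |w.re| ≤ ‖w‖ := Complex.abs_re_le_norm w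
    simp only [Complex.add_re, Complex.one_re]
    have := abs_le.1 this
    linarith
  have him : (1 + w).im = -(t * z.im) / Complex.normSq z := by
    simp [hw, Complex.div_im, Complex.normSq]
    ring
  rcases lt_or_ge z.im 0 with h | h
  · have h1 : Complex.arg z < 0 := Complex.arg_neg_iff.2 h
    have h2 : 0 ≤ Complex.arg (1 + w) := by
      rw [Complex.arg_nonneg_iff, him]
      have : 0 ≤ -(t * z.im) := by nlinarith
      exact div_nonneg this (Complex.normSq_nonneg z)
    have h3 : Complex.arg (1 + w) ≤ π/2 :=
      Complex.arg_le_pi_div_two_iff.2 (Or.inl hre.le)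
    have h4 := Complex.neg_pi_lt_arg z
    have h5 := Real.pi_pos
    constructor <;> [linarith; linarith]
  · have h1 : 0 ≤ Complex.arg z := Complex.arg_nonneg_iff.2 h
    have h2 : Complex.arg z ≤ π := Complex.arg_le_pi z
    have h3 : Complex.arg (1 + w) ≤ 0 := by
      rcases lt_or_eq_of_le h with h' | h'
      · have : (1 + w).im < 0 := by
          rw [him]
          apply div_neg_of_neg_of_pos
          · nlinarith
          · exact Complex.normSq_pos.2 hz
        exact (Complex.arg_neg_iff.2 this).le
      · have : (1 + w).im = 0 := by rw [him, ← h']; ring_nf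
        have := Complex.arg_eq_zero_iff.2 ⟨hre.le, this⟩
        simp [this]
    have h4 := Complex.neg_pi_lt_arg (1 + w)
    constructor <;> linarith

private lemma aux_zlog (t : ℝ) (ht : t ≠ 0) :
    Tendsto (fun z : ℂ => z * Complex.log (1 + (t : ℂ)/z))
      (Filter.comap (fun z : ℂ => ‖z‖) Filter.atTop) (nhds (t : ℂ)) := by
  set l := Filter.comap (fun z : ℂ => ‖z‖) Filter.atTop
  have hL1 : Tendsto (fun z : ℂ => (t : ℂ)/z) l (nhds 0) := by
    rw [tendsto_zero_iff_norm_tendsto_zero]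
    have h1 : Tendsto (fun z : ℂ => |t| / ‖z‖) l (nhds 0) :=
      Filter.Tendsto.div_atTop tendsto_const_nhds tendsto_comap
    convert h1 using 2 with z
    simp [norm_div]
  have hz0 : ∀ᶠ z : ℂ in l, z ≠ 0 := by
    filter_upwards [(tendsto_comap (f := fun z : ℂ => ‖z‖)).eventually
      (Filter.eventually_ge_atTop 1)] with z hz
    intro h; rw [h] at hz; simp at hz; linarith
  have hslope : Tendsto (fun u : ℂ => Complex.log u / (u - 1)) (nhdsWithin 1 {(1:ℂ)}ᶜ)
      (nhds 1) := by
    have := hasDerivAt_iff_tendsto_slope.1 (Complex.hasDerivAt_log Complex.one_mem_slitPlane)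
    simp only [inv_one] at this
    convert this using 2 with u
    simp [slope_def_field, Complex.log_one, div_eq_iff]
  have hu : Tendsto (fun z : ℂ => 1 + (t : ℂ)/z) l (nhdsWithin 1 {(1:ℂ)}ᶜ) := by
    rw [tendsto_nhdsWithin_iff]
    constructor
    · have := hL1.const_add (1 : ℂ); simpa using this
    · filter_upwards [hz0] with z hz
      simp only [Set.mem_compl_iff, Set.mem_singleton_iff]
      intro h
      have : (t : ℂ)/z = 0 := by linear_combination h
      rw [div_eq_zero_iff] at this
      rcases this with h' | h'
      · exact ht (by exact_mod_cast h')
      · exact hz h'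
  have hcomp : Tendsto (fun z : ℂ => Complex.log (1 + (t:ℂ)/z) / ((t:ℂ)/z)) l (nhds 1) := by
    have := hslope.comp hu
    convert this using 2 with z
    simp [Function.comp]
  have := hcomp.const_mul (t : ℂ)
  rw [mul_one] at this
  apply this.congr'
  filter_upwards [hz0] with z hz
  have ht' : (t : ℂ) ≠ 0 := by exact_mod_cast ht
  field_simp

theorem holomorphic_and_decay_at_infinity
    (n : ℕ) (hn : 1 ≤ n) (a : ℕ → ℝ)
    (hpos : ∀ k ∈ Finset.Icc 1 n, 0 < a k)
    (hmono : ∀ k ∈ Finset.Icc 1 (n - 1), a k ≤ a (k + 1)) :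
    DifferentiableOn ℂ
        (fun z : ℂ =>
          Complex.exp ((1 / (n : ℂ)) *
              ∑ k ∈ Finset.Icc 1 n, Complex.log (((a k : ℝ) : ℂ) + z))
            - z - (((∑ k ∈ Finset.Icc 1 n, a k) / n : ℝ) : ℂ))
        {z : ℂ | ((a 1 : ℝ) : ℂ) + z ∈ Complex.slitPlane}
      ∧ Tendsto
          (fun z : ℂ =>
            Complex.exp ((1 / (n : ℂ)) *
                ∑ k ∈ Finset.Icc 1 n, Complex.log (((a k : ℝ) : ℂ) + z))
              - z - (((∑ k ∈ Finset.Icc 1 n, a k) / n : ℝ) : ℂ))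
          (Filter.comap (fun z : ℂ => ‖z‖) Filter.atTop) (nhds 0) := by
  -- basic facts
  have hmono' : ∀ k ∈ Finset.Icc 1 n, a 1 ≤ a k := by
    intro k hk
    simp only [Finset.mem_Icc] at hk hmono
    clear hn hpos
    induction k with
    | zero => omega
    | succ m ih =>
      rcases Nat.eq_or_lt_of_le hk.1 with h | h
      · simp [← h]
      · have h1 : 1 ≤ m := by omega
        exact le_trans (ih ⟨h1, by omega⟩) (hmono m ⟨h1, by omega⟩)
  constructor
  · -- Part 1: differentiability
    have hs : ∀ k ∈ Finset.Icc 1 n,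
        ∀ z ∈ {z : ℂ | ((a 1 : ℝ) : ℂ) + z ∈ Complex.slitPlane},
        ((a k : ℝ) : ℂ) + z ∈ Complex.slitPlane := by
      intro k hk z hz
      have hbc := hmono' k hk
      rw [Set.mem_setOf_eq, Complex.mem_slitPlane_iff] at hz
      rw [Complex.mem_slitPlane_iff]
      simp only [Complex.add_re, Complex.add_im, Complex.ofReal_re,
        Complex.ofReal_im] at hz ⊢
      rcases hz with h | h
      · exact Or.inl (by linarith)
      · exact Or.inr (by simpa using h)
    apply DifferentiableOn.sub _ (differentiableOn_const _)
    apply DifferentiableOn.sub _ differentiableOn_id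
    apply DifferentiableOn.cexp
    apply DifferentiableOn.const_mul
    apply DifferentiableOn.fun_sum
    intro k hk z hz
    apply DifferentiableAt.differentiableWithinAt
    exact (Complex.differentiableAt_log (hs k hk z hz)).comp z
      ((differentiable_const _).add differentiable_id).differentiableAt
  · -- Part 2: decay at infinity
    set l := Filter.comap (fun z : ℂ => ‖z‖) Filter.atTop with hl
    set B : ℝ := (∑ k ∈ Finset.Icc 1 n, a k) + 1 with hB
    have hsumpos : 0 < ∑ k ∈ Finset.Icc 1 n, a k := by
      apply Finset.sum_pos hpos
      exact ⟨1, by simp [Finset.mem_Icc]; omega⟩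
    have hBpos : 0 < B := by positivity
    have hak_le : ∀ k ∈ Finset.Icc 1 n, a k < B := by
      intro k hk
      have : a k ≤ ∑ j ∈ Finset.Icc 1 n, a j :=
        Finset.single_le_sum (fun j hj => (hpos j hj).le) hk
      linarith
    have hev : ∀ᶠ z : ℂ in l, B ≤ ‖z‖ :=
      (tendsto_comap (f := fun z : ℂ => ‖z‖)).eventually (Filter.eventually_ge_atTop B)
    have hz0 : ∀ᶠ z : ℂ in l, z ≠ 0 := by
      filter_upwards [hev] with z hz h
      rw [h] at hz; simp at hz; linarith
    have hn0 : (n : ℂ) ≠ 0 := Nat.cast_ne_zero.2 (by omega)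
    -- h as function
    set h : ℂ → ℂ := fun z => (1 / (n : ℂ)) *
      ∑ k ∈ Finset.Icc 1 n, Complex.log (1 + ((a k : ℝ) : ℂ)/z) with hh
    -- the key identity
    have hident : ∀ᶠ z : ℂ in l,
        Complex.exp ((1 / (n : ℂ)) *
          ∑ k ∈ Finset.Icc 1 n, Complex.log (((a k : ℝ) : ℂ) + z))
          = z * Complex.exp (h z) := by
      filter_upwards [hev, hz0] with z hzB hz
      have hsplit : ∀ k ∈ Finset.Icc 1 n,
          Complex.log (((a k : ℝ) : ℂ) + z)
            = Complex.log z + Complex.log (1 + ((a k : ℝ) : ℂ)/z) := by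
        intro k hk
        have hak := hpos k hk
        have hfac : ((a k : ℝ) : ℂ) + z = z * (1 + ((a k : ℝ) : ℂ)/z) := by
          field_simp
          ring
        have hne : (1 : ℂ) + ((a k : ℝ) : ℂ)/z ≠ 0 := by
          intro hc
          have : ‖((a k : ℝ) : ℂ)/z‖ = 1 := by
            have : ((a k : ℝ) : ℂ)/z = -1 := by linear_combination hc
            rw [this]; simp
          rw [norm_div, Complex.norm_real, Real.norm_eq_abs, abs_of_pos hak] at this
          rw [div_eq_one_iff_eq (norm_pos_iff.2 hz).ne'] at this
          have := hak_le k hk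
          linarith
        rw [hfac]
        exact Complex.log_mul hz hne
          (aux_arg_mem (a k) hak z hz (lt_of_lt_of_le (hak_le k hk) hzB))
      rw [Finset.sum_congr rfl hsplit, Finset.sum_add_distrib, Finset.sum_const,
        Nat.card_Icc]
      have : (1 / (n : ℂ)) * ((n + 1 - 1) • Complex.log z +
          ∑ k ∈ Finset.Icc 1 n, Complex.log (1 + ((a k : ℝ) : ℂ)/z))
          = Complex.log z + h z := by
        simp only [Nat.add_sub_cancel, nsmul_eq_mul, hh]
        field_simp
      rw [this, Complex.exp_add, Complex.exp_log hz]
    -- zh → Ac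
    set Ac : ℂ := (((∑ k ∈ Finset.Icc 1 n, a k) / n : ℝ) : ℂ) with hAc
    have hAc0 : Ac ≠ 0 := by
      rw [hAc]
      simp only [ne_eq, Complex.ofReal_eq_zero]
      exact ne_of_gt (div_pos hsumpos (by exact_mod_cast hn))
    have hzh : Tendsto (fun z : ℂ => z * h z) l (nhds Ac) := by
      have hsum : Tendsto (fun z : ℂ =>
          ∑ k ∈ Finset.Icc 1 n, z * Complex.log (1 + ((a k : ℝ) : ℂ)/z)) l
          (nhds (∑ k ∈ Finset.Icc 1 n, ((a k : ℝ) : ℂ))) := by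
        apply tendsto_finset_sum
        intro k hk
        exact aux_zlog (a k) (hpos k hk).ne'
      have := hsum.const_mul (1 / (n : ℂ))
      have heq : (1 / (n : ℂ)) * ∑ k ∈ Finset.Icc 1 n, ((a k : ℝ) : ℂ) = Ac := by
        rw [hAc]
        push_cast
        field_simp
      rw [heq] at this
      apply this.congr
      intro z
      rw [hh]
      simp only
      simp only [Finset.mul_sum]
      exact Finset.sum_congr rfl fun k _ => by ring
    -- h → 0 within ≠ 0
    have hinv : Tendsto (fun z : ℂ => z⁻¹) l (nhds 0) := by
      rw [tendsto_zero_iff_norm_tendsto_zero]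
      have h1 : Tendsto (fun z : ℂ => (‖z‖)⁻¹) l (nhds 0) :=
        (tendsto_comap (f := fun z : ℂ => ‖z‖)).inv_tendsto_atTop
      convert h1 using 2 with z
      simp
    have hh0 : Tendsto h l (nhds 0) := by
      have := hzh.mul hinv
      rw [mul_zero] at this
      apply this.congr'
      filter_upwards [hz0] with z hz
      field_simp
    have hhne : ∀ᶠ z : ℂ in l, h z ≠ 0 := by
      filter_upwards [hzh.eventually_ne hAc0] with z hz hc
      rw [hc, mul_zero] at hz
      exact hz rfl
    have hhW : Tendsto h l (nhdsWithin 0 {(0:ℂ)}ᶜ) := by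
      rw [tendsto_nhdsWithin_iff]
      exact ⟨hh0, by filter_upwards [hhne] with z hz; exact hz⟩
    -- slope of exp at 0
    have hexp : Tendsto (fun w : ℂ => (Complex.exp w - 1) / w)
        (nhdsWithin 0 {(0:ℂ)}ᶜ) (nhds 1) := by
      have := hasDerivAt_iff_tendsto_slope.1 (Complex.hasDerivAt_exp 0)
      rw [Complex.exp_zero] at this
      convert this using 2 with w
      simp [slope_def_field]
    have hq : Tendsto (fun z : ℂ => (Complex.exp (h z) - 1) / h z) l (nhds 1) :=
      hexp.comp hhW
    -- final assembly
    have hmain : Tendsto (fun z : ℂ =>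
        (z * h z) * ((Complex.exp (h z) - 1) / h z) - Ac) l (nhds 0) := by
      have := (hzh.mul hq).sub (tendsto_const_nhds (x := Ac))
      rw [mul_one, sub_self] at this
      exact this
    apply hmain.congr'
    filter_upwards [hident, hhne, hz0] with z hzi hzh0 hz
    rw [hzi]
    have : z * Complex.exp (h z) - z = (z * h z) * ((Complex.exp (h z) - 1) / h z) := by
      field_simp
    rw [← this]
end
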